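/- Suppose Ω satisfies Condition (*). Equip N_Ω ⊆ ℍ^{k+2} with the subspace topology, and let ~ be the equivalence relation on N_Ω given by x ~ y iff there is a (k+2)-tuple t of unit complex quaternions with y_p = t_p·x_p for all p. Let K = {s ∈ ℍ^{k+2} : every s_p is purely imaginary, Σ_{p=1}^{k+2} s_p·Ω_{pj} = 0 for j = 1,…,k, and Σ_{p=1}^{k+2} ‖s_p‖ = 1}, with the subspace topology. Then there is a homeomorphism h from the quotient space N_Ω/~ onto K such that h([x]) = ((star x_p)·i·x_p)_{p=1}^{k+2} for every x ∈ N_Ω. -/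

import Mathlib

open Finset
open scoped Quaternion

/-- The imaginary unit `i` of the quaternions. -/
def qI : ℍ := ⟨0, 1, 0, 0⟩

/-- A quaternion is a *unit complex* quaternion if its `j`- and `k`-components vanish
and it has norm `1`. -/
def IsUnitComplexQ (z : ℍ) : Prop := z.imJ = 0 ∧ z.imK = 0 ∧ ‖z‖ = 1

/-- Determinant of the submatrix of `Ω` obtained by deleting the rows in `s`. -/
noncomputable def minorDet (k : ℕ) (Ω : Matrix (Fin (k + 2)) (Fin k) ℤ)
    (s : Finset (Fin (k + 2))) : ℤ :=
  if h : sᶜ.card = k then (Ω.submatrix (sᶜ.orderEmbOfFin h) id).det else 0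

/-- `Δ_{pq}`: determinant of `Ω` with rows `p` and `q` deleted. -/
noncomputable def Delta (k : ℕ) (Ω : Matrix (Fin (k + 2)) (Fin k) ℤ) (p q : Fin (k + 2)) : ℤ :=
  minorDet k Ω {p, q}

/-- Condition (*). -/
def CondStar (k : ℕ) (Ω : Matrix (Fin (k + 2)) (Fin k) ℤ) : Prop :=
  (∀ p q : Fin (k + 2), p ≠ q → Delta k Ω p q ≠ 0) ∧
  (∀ p : Fin (k + 2), (Finset.univ.erase p).gcd (fun q => (Delta k Ω p q).natAbs) = 1)

/-- The zero set `N_Ω` of the moment map `μ_Ω`, inside the unit sphere of `ℍ^{k+2}`. -/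
def NOmega (k : ℕ) (Ω : Matrix (Fin (k + 2)) (Fin k) ℤ) : Set (Fin (k + 2) → ℍ) :=
  {x | (∑ p : Fin (k + 2), ‖x p‖ ^ 2 = 1) ∧
    ∀ j : Fin k, ∑ p : Fin (k + 2), star (x p) * qI * x p * ((Ω p j : ℤ) : ℍ) = 0}

/-- The equivalence relation on `N_Ω`: `x ~ y` iff `y` is obtained from `x` by the
action of a tuple of unit complex quaternions. -/
def torusRel (k : ℕ) (Ω : Matrix (Fin (k + 2)) (Fin k) ℤ) :
    NOmega k Ω → NOmega k Ω → Prop := fun x y =>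
  ∃ t : Fin (k + 2) → ℍ, (∀ p, IsUnitComplexQ (t p)) ∧
    ∀ p, (y : Fin (k + 2) → ℍ) p = t p * (x : Fin (k + 2) → ℍ) p

/-- The target `K`: purely imaginary tuples in the kernel of `Ωᵗ` of total norm `1`. -/
def KSet (k : ℕ) (Ω : Matrix (Fin (k + 2)) (Fin k) ℤ) : Set (Fin (k + 2) → ℍ) :=
  {s | (∀ p, (s p).re = 0) ∧
    (∀ j : Fin k, ∑ p : Fin (k + 2), s p * ((Ω p j : ℤ) : ℍ) = 0) ∧
    ∑ p : Fin (k + 2), ‖s p‖ = 1}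

namespace QAux

/-- quaternion from components -/
def qmk (r a b c : ℝ) : ℍ := ⟨r, a, b, c⟩

lemma normSq_eq_sq_norm (a : ℍ) : (Quaternion.normSq a : ℝ) = ‖a‖ ^ 2 := by
  rw [Quaternion.normSq_eq_norm_mul_self, sq]

lemma norm_qI : ‖qI‖ = 1 := by
  have h : (Quaternion.normSq qI : ℝ) = 1 := by
    rw [Quaternion.normSq_def']; simp [qI]
  rw [normSq_eq_sq_norm] at h
  nlinarith [norm_nonneg qI]

lemma re_conj (a : ℍ) : (star a * qI * a).re = 0 := by
  simp only [Quaternion.re_mul, Quaternion.imI_mul, Quaternion.imJ_mul, Quaternion.imK_mul,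
    Quaternion.re_star, Quaternion.imI_star, Quaternion.imJ_star, Quaternion.imK_star]
  show _ = (0:ℝ)
  simp only [qI]
  ring_nf

lemma norm_conj (a : ℍ) : ‖star a * qI * a‖ = ‖a‖ ^ 2 := by
  rw [norm_mul, norm_mul, Quaternion.norm_star, norm_qI, mul_one, sq]

lemma commute_qI {z : ℍ} (hj : z.imJ = 0) (hk : z.imK = 0) : z * qI = qI * z := by
  apply Quaternion.ext <;>
    simp [Quaternion.re_mul, Quaternion.imI_mul, Quaternion.imJ_mul, Quaternion.imK_mul,
      hj, hk] <;> simp [qI]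

lemma imJ_imK_of_commute {z : ℍ} (h : z * qI = qI * z) : z.imJ = 0 ∧ z.imK = 0 := by
  have h1 := congrArg QuaternionAlgebra.imJ h
  have h2 := congrArg QuaternionAlgebra.imK h
  simp only [Quaternion.imJ_mul, Quaternion.imK_mul] at h1 h2
  simp only [qI] at h1 h2
  constructor <;> [skip; skip] <;> nlinarith [h1, h2]

lemma ucq_conj {t : ℍ} (ht : IsUnitComplexQ t) : star t * qI * t = qI := by
  obtain ⟨hj, hk, hn⟩ := ht
  have hc : t * qI = qI * t := commute_qI hj hk
  have h1 : star t * qI * t = star t * t * qI := by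
    rw [mul_assoc, ← hc, ← mul_assoc]
  rw [h1, Quaternion.star_mul_self]
  have : (Quaternion.normSq t : ℝ) = 1 := by rw [normSq_eq_sq_norm, hn]; norm_num
  rw [this]; simp

lemma conj_formula (a b c : ℝ) :
    star (qmk 0 a b c) * qI * (qmk 0 a b c) =
      qmk 0 (a ^ 2 - b ^ 2 - c ^ 2) (2 * (a * b)) (2 * (a * c)) := by
  apply Quaternion.ext <;>
    simp only [Quaternion.re_mul, Quaternion.imI_mul, Quaternion.imJ_mul, Quaternion.imK_mul,
      Quaternion.re_star, Quaternion.imI_star, Quaternion.imJ_star, Quaternion.imK_star] <;>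
      simp only [qI, qmk] <;>
    ring

/-- Surjectivity of `a ↦ star a * qI * a` onto purely imaginary quaternions. -/
lemma exists_preimage (s : ℍ) (hre : s.re = 0) : ∃ x : ℍ, star x * qI * x = s := by
  set n : ℝ := ‖s‖ with hn
  have hn0 : 0 ≤ n := norm_nonneg s
  have hn2 : n ^ 2 = s.imI ^ 2 + s.imJ ^ 2 + s.imK ^ 2 := by
    rw [hn, ← normSq_eq_sq_norm, Quaternion.normSq_def', hre]
    ring
  by_cases hca : n + s.imI = 0
  · -- s = -n • i
    have hβγ : s.imJ = 0 ∧ s.imK = 0 := by constructor <;> nlinarith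
    have hα : s.imI = -n := by linarith
    refine ⟨qmk 0 0 (Real.sqrt n) 0, ?_⟩
    rw [conj_formula]
    have h1 : (0:ℝ) ^ 2 - Real.sqrt n ^ 2 - 0 ^ 2 = s.imI := by
      rw [Real.sq_sqrt hn0, hα]; ring
    have h2 : 2 * ((0:ℝ) * Real.sqrt n) = s.imJ := by rw [hβγ.1]; ring
    have h3 : 2 * ((0:ℝ) * 0) = s.imK := by rw [hβγ.2]; ring
    exact Quaternion.ext _ _ hre.symm h1 h2 h3
  · have hpos : 0 < n + s.imI := by
      rcases lt_or_eq_of_le (by nlinarith : (0:ℝ) ≤ n + s.imI) with h | h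
      · exact h
      · exact absurd h.symm hca
    set d : ℝ := Real.sqrt (2 * (n + s.imI)) with hd
    have hd2 : d ^ 2 = 2 * (n + s.imI) := Real.sq_sqrt (by linarith)
    have hdne : d ≠ 0 := by
      intro h0
      rw [h0] at hd2; nlinarith
    refine ⟨qmk 0 ((n + s.imI) / d) (s.imJ / d) (s.imK / d), ?_⟩
    rw [conj_formula]
    have h1 : ((n + s.imI) / d) ^ 2 - (s.imJ / d) ^ 2 - (s.imK / d) ^ 2 = s.imI := by
      field_simp
      rw [hd2]; nlinarith
    have h2 : 2 * ((n + s.imI) / d * (s.imJ / d)) = s.imJ := by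
      rw [div_mul_div_comm, ← sq, hd2]
      field_simp
    have h3 : 2 * ((n + s.imI) / d * (s.imK / d)) = s.imK := by
      rw [div_mul_div_comm, ← sq, hd2]
      field_simp
    exact Quaternion.ext _ _ hre.symm h1 h2 h3

/-- Injectivity up to unit complex factor. -/
lemma exists_t {x y : ℍ} (h : star x * qI * x = star y * qI * y) :
    ∃ t, IsUnitComplexQ t ∧ y = t * x := by
  have hnxy : ‖x‖ = ‖y‖ := by
    have h2 : ‖x‖ ^ 2 = ‖y‖ ^ 2 := by rw [← norm_conj x, ← norm_conj y, h]
    nlinarith [norm_nonneg x, norm_nonneg y]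
  by_cases hx : x = 0
  · have hy : y = 0 := by
      rw [hx] at hnxy; simpa using hnxy.symm
    refine ⟨1, ⟨?_, ?_, norm_one⟩, by rw [hx, hy, mul_zero]⟩ <;> rfl
  · set u : ℍ := y * star x with hu
    have hnsx : (Quaternion.normSq x : ℝ) = (Quaternion.normSq y : ℝ) := by
      rw [normSq_eq_sq_norm, normSq_eq_sq_norm, hnxy]
    have hc0 : ((Quaternion.normSq x : ℝ) : ℍ) ≠ 0 := by
      intro h0
      exact hx (Quaternion.normSq_eq_zero.mp
        (Quaternion.coe_injective (h0.trans Quaternion.coe_zero.symm)))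
    have hcm : u * qI = qI * u := by
      have h1 : y * (star x * qI * x) * star x = (y * star x) * qI * (x * star x) := by
        noncomm_ring
      have h2 : y * (star y * qI * y) * star x = (y * star y) * qI * (y * star x) := by
        noncomm_ring
      have h3 : (y * star x) * qI * (x * star x) = (y * star y) * qI * (y * star x) := by
        rw [← h1, ← h2, h]
      rw [Quaternion.self_mul_star, Quaternion.self_mul_star, ← hnsx] at h3
      have h4 : u * qI * ((Quaternion.normSq x : ℝ) : ℍ) =
          qI * u * ((Quaternion.normSq x : ℝ) : ℍ) := by
        rw [h3, hu, mul_assoc, ← Quaternion.coe_commutes, ← mul_assoc]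
      exact mul_right_cancel₀ hc0 h4
    obtain ⟨huj, huk⟩ := imJ_imK_of_commute hcm
    set c : ℝ := (‖x‖ ^ 2)⁻¹ with hcdef
    refine ⟨u * (c : ℍ), ⟨?_, ?_, ?_⟩, ?_⟩
    · show (u * (c : ℍ)).imJ = 0
      simp [Quaternion.imJ_mul, huj, huk]
    · show (u * (c : ℍ)).imK = 0
      simp [Quaternion.imK_mul, huj, huk]
    · rw [norm_mul, Quaternion.norm_coe, hu, norm_mul, Quaternion.norm_star, ← hnxy,
        hcdef, Real.norm_eq_abs, abs_inv, abs_of_nonneg (by positivity)]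
      have : ‖x‖ ≠ 0 := norm_ne_zero_iff.mpr hx
      field_simp
    · have hxn : ‖x‖ ≠ 0 := norm_ne_zero_iff.mpr hx
      have hval : Quaternion.normSq x * c = 1 := by
        have := normSq_eq_sq_norm x
        rw [hcdef]
        field_simp [this]
        exact this
      show y = y * star x * (c : ℍ) * x
      rw [mul_assoc (y * star x), Quaternion.coe_commutes, ← mul_assoc,
        mul_assoc y (star x) x, Quaternion.star_mul_self, mul_assoc,
        ← Quaternion.coe_mul, hval, Quaternion.coe_one, mul_one]

end QAux



/-- Membership of the moment-map image in `KSet`. -/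
lemma mem_KSet_of_NOmega (k : ℕ) (Ω : Matrix (Fin (k + 2)) (Fin k) ℤ) (x : NOmega k Ω) :
    (fun p => star ((x : Fin (k+2) → ℍ) p) * qI * (x : Fin (k+2) → ℍ) p) ∈ KSet k Ω := by
  obtain ⟨x, hx1, hx2⟩ := x
  refine ⟨fun p => QAux.re_conj _, hx2, ?_⟩
  calc ∑ p : Fin (k+2), ‖star (x p) * qI * x p‖
      = ∑ p : Fin (k+2), ‖x p‖ ^ 2 := Finset.sum_congr rfl fun p _ => QAux.norm_conj _
    _ = 1 := hx1

/-- The moment map as a map `N_Ω → K`. -/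
noncomputable def momentMap (k : ℕ) (Ω : Matrix (Fin (k + 2)) (Fin k) ℤ) : NOmega k Ω → KSet k Ω :=
  fun x => ⟨fun p => star (x.1 p) * qI * x.1 p, mem_KSet_of_NOmega k Ω x⟩

open QAux in
theorem quotient_homeomorph_KSet (k : ℕ) (hk : 2 ≤ k)
    (Ω : Matrix (Fin (k + 2)) (Fin k) ℤ) (hΩ : CondStar k Ω) :
    ∃ h : Quot (torusRel k Ω) ≃ₜ KSet k Ω,
      ∀ x : NOmega k Ω, (h (Quot.mk (torusRel k Ω) x) : Fin (k + 2) → ℍ) =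
        fun p => star ((x : Fin (k + 2) → ℍ) p) * qI * (x : Fin (k + 2) → ℍ) p := by
  classical
  have hF : ∀ x : NOmega k Ω, (momentMap k Ω x : Fin (k+2) → ℍ) =
      fun p => star (x.1 p) * qI * x.1 p := fun _ => rfl
  have hresp : ∀ a b, torusRel k Ω a b → momentMap k Ω a = momentMap k Ω b := by
    rintro a b ⟨t, ht, hab⟩
    apply Subtype.ext; funext p
    show star (a.1 p) * qI * a.1 p = star (b.1 p) * qI * b.1 p
    rw [hab p, star_mul]
    have h1 : (star (a.1 p) * star (t p)) * qI * (t p * a.1 p)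
        = star (a.1 p) * (star (t p) * qI * t p) * a.1 p := by noncomm_ring
    rw [h1, ucq_conj (ht p)]
  -- compactness of N_Ω
  have hNset : NOmega k Ω = {x : Fin (k+2) → ℍ | ∑ p : Fin (k+2), ‖x p‖ ^ 2 = 1} ∩
      ⋂ j : Fin k, {x : Fin (k+2) → ℍ |
        ∑ p : Fin (k+2), star (x p) * qI * x p * ((Ω p j : ℤ) : ℍ) = 0} := by
    ext x
    constructor
    · rintro ⟨h1, h2⟩; exact ⟨h1, Set.mem_iInter.mpr h2⟩
    · rintro ⟨h1, h2⟩; exact ⟨h1, fun j => Set.mem_iInter.mp h2 j⟩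
  have hclosed : IsClosed (NOmega k Ω) := by
    rw [hNset]
    refine IsClosed.inter (isClosed_eq ?_ continuous_const)
      (isClosed_iInter fun j => isClosed_eq ?_ continuous_const)
    · exact continuous_finset_sum _ fun p _ => ((continuous_apply p).norm.pow 2)
    · exact continuous_finset_sum _ fun p _ =>
        (((continuous_apply p).star.mul continuous_const).mul (continuous_apply p)).mul
          continuous_const
  have hbdd : Bornology.IsBounded (NOmega k Ω) := by
    apply Bornology.IsBounded.subset (Metric.isBounded_closedBall (x := (0 : Fin (k+2) → ℍ))
      (r := 1))
    rintro x ⟨hx1, -⟩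
    rw [Metric.mem_closedBall, dist_zero_right, pi_norm_le_iff_of_nonneg zero_le_one]
    intro p
    have hle : ‖x p‖ ^ 2 ≤ 1 := by
      rw [← hx1]
      exact Finset.single_le_sum (f := fun q => ‖x q‖ ^ 2) (fun q _ => sq_nonneg _)
        (Finset.mem_univ p)
    nlinarith [norm_nonneg (x p)]
  haveI : CompactSpace (NOmega k Ω) :=
    isCompact_iff_compactSpace.mp (Metric.isCompact_of_isClosed_isBounded hclosed hbdd)
  -- bijectivity of the lift
  have hinj : Function.Injective (Quot.lift (momentMap k Ω) hresp) := by
    intro a b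
    obtain ⟨x⟩ := a
    obtain ⟨y⟩ := b
    intro hxy
    have hxy' : ∀ p, star (x.1 p) * qI * x.1 p = star (y.1 p) * qI * y.1 p :=
      fun p => congrFun (congrArg Subtype.val hxy) p
    apply Quot.sound
    choose t ht1 ht2 using fun p => exists_t (hxy' p)
    exact ⟨t, ht1, ht2⟩
  have hsurj : Function.Surjective (Quot.lift (momentMap k Ω) hresp) := by
    rintro ⟨s, hs1, hs2, hs3⟩
    choose x hx using fun p => exists_preimage (s p) (hs1 p)
    have hxm : x ∈ NOmega k Ω := by
      constructor
      · calc ∑ p : Fin (k+2), ‖x p‖ ^ 2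
            = ∑ p : Fin (k+2), ‖s p‖ := Finset.sum_congr rfl fun p _ => by
              rw [← hx p, norm_conj]
          _ = 1 := hs3
      · intro j
        calc ∑ p : Fin (k+2), star (x p) * qI * x p * ((Ω p j : ℤ) : ℍ)
            = ∑ p : Fin (k+2), s p * ((Ω p j : ℤ) : ℍ) :=
              Finset.sum_congr rfl fun p _ => by rw [hx p]
          _ = 0 := hs2 j
    exact ⟨Quot.mk _ ⟨x, hxm⟩, Subtype.ext (funext fun p => hx p)⟩
  have hFc : Continuous (momentMap k Ω) := by
    apply Continuous.subtype_mk
    apply continuous_pi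
    intro p
    exact (((continuous_apply p).comp continuous_subtype_val).star.mul continuous_const).mul
      ((continuous_apply p).comp continuous_subtype_val)
  refine ⟨Continuous.homeoOfEquivCompactToT2
      (f := Equiv.ofBijective (Quot.lift (momentMap k Ω) hresp) ⟨hinj, hsurj⟩)
      (continuous_quot_lift hresp hFc),
    fun x => ?_⟩
  have t3 : (Continuous.homeoOfEquivCompactToT2
      (f := Equiv.ofBijective (Quot.lift (momentMap k Ω) hresp) ⟨hinj, hsurj⟩)
      (continuous_quot_lift hresp hFc)) (Quot.mk (torusRel k Ω) x) = momentMap k Ω x := rfl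
  rw [t3]
  exact hF x
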